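/- For every x > 0 there exists θ with 0 < θ < 1 such that Γ(x+1) = √(2π) · x^{x+1/2} · exp(−x + θ/(12x)). -/

import Mathlib

open Real Filter Set

private lemma log_ineq_lower {u : ℝ} (h0 : 0 < u) (h1 : u < 1) :
    2 * u < log (1 + u) - log (1 - u) := by
  set f : ℝ → ℝ := fun v => log (1 + v) - log (1 - v) - 2 * v with hf
  have key : StrictMonoOn f (Ico (0:ℝ) 1) := by
    have hder : ∀ v ∈ Ico (0:ℝ) 1, HasDerivAt f (1/(1+v) + 1/(1-v) - 2) v := by
      intro v hv
      have h1v : (1:ℝ) + v ≠ 0 := by nlinarith [hv.1, hv.2]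
      have h2v : (1:ℝ) - v ≠ 0 := by nlinarith [hv.1, hv.2]
      have d1 : HasDerivAt (fun v : ℝ => log (1 + v)) (1/(1+v)) v := by
        simpa using (((hasDerivAt_id v).const_add 1).log h1v)
      have d2 : HasDerivAt (fun v : ℝ => log (1 - v)) (-1/(1-v)) v := by
        simpa [← sub_eq_add_neg] using (((hasDerivAt_id v).const_mul (-1:ℝ)).const_add 1).log (by simp only [id_eq]; intro h; apply h2v; linarith)
      have := (d1.sub d2).sub (((hasDerivAt_id v).const_mul (2:ℝ)))
      exact this.congr_deriv (by ring)
    apply strictMonoOn_of_deriv_pos (convex_Ico 0 1)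
    · exact fun v hv => ((hder v hv).continuousAt).continuousWithinAt
    · intro v hv
      rw [interior_Ico] at hv
      rw [(hder v (Ioo_subset_Ico_self hv)).deriv]
      have h1v : (0:ℝ) < 1 + v := by nlinarith [hv.1, hv.2]
      have h2v : (0:ℝ) < 1 - v := by nlinarith [hv.1, hv.2]
      rw [div_add_div _ _ h1v.ne' h2v.ne', sub_pos]
      rw [lt_div_iff₀ (by positivity)]
      nlinarith [hv.1, hv.2]
  have := key (by constructor <;> norm_num) (⟨h0.le, h1⟩ : u ∈ Ico (0:ℝ) 1) h0
  simp only [hf] at this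
  simp at this
  linarith

private lemma log_ineq_upper {u : ℝ} (h0 : 0 < u) (h1 : u < 1) :
    log (1 + u) - log (1 - u) < 2 * u + 2 * u ^ 3 / (3 * (1 - u ^ 2)) := by
  set f : ℝ → ℝ := fun v => 2 * v + 2 * v ^ 3 / (3 * (1 - v ^ 2)) - (log (1 + v) - log (1 - v)) with hf
  have key : StrictMonoOn f (Ico (0:ℝ) 1) := by
    have hder : ∀ v ∈ Ico (0:ℝ) 1, HasDerivAt f
        (2 + (6 * v ^ 2 * (3 * (1 - v ^ 2)) - 2 * v ^ 3 * (3 * (-2 * v))) / (3 * (1 - v ^ 2)) ^ 2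
          - (1/(1+v) - (-1/(1-v)))) v := by
      intro v hv
      have h1v : (1:ℝ) + v ≠ 0 := by nlinarith [hv.1, hv.2]
      have h2v : (1:ℝ) - v ≠ 0 := by nlinarith [hv.1, hv.2]
      have h3v : 3 * (1 - v ^ 2) ≠ 0 := by nlinarith [hv.1, hv.2]
      have d1 : HasDerivAt (fun v : ℝ => log (1 + v)) (1/(1+v)) v := by
        simpa using (((hasDerivAt_id v).const_add 1).log h1v)
      have d2 : HasDerivAt (fun v : ℝ => log (1 - v)) (-1/(1-v)) v := by
        simpa [← sub_eq_add_neg] using (((hasDerivAt_id v).const_mul (-1:ℝ)).const_add 1).log (by simp only [id_eq]; intro h; apply h2v; linarith)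
      have dnum : HasDerivAt (fun v : ℝ => 2 * v ^ 3) (6 * v ^ 2) v := by
        have := (hasDerivAt_pow 3 v).const_mul (2:ℝ)
        exact this.congr_deriv (by push_cast; ring)
      have dden : HasDerivAt (fun v : ℝ => 3 * (1 - v ^ 2)) (3 * (-2 * v)) v := by
        have := ((hasDerivAt_pow 2 v).const_sub 1).const_mul (3:ℝ)
        exact this.congr_deriv (by push_cast; ring)
      have dq := dnum.div dden h3v
      have := (((hasDerivAt_id v).const_mul (2:ℝ)).add dq).sub (d1.sub d2)
      exact this.congr_deriv (by ring)
    apply strictMonoOn_of_deriv_pos (convex_Ico 0 1)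
    · exact fun v hv => ((hder v hv).continuousAt).continuousWithinAt
    · intro v hv
      rw [interior_Ico] at hv
      rw [(hder v (Ioo_subset_Ico_self hv)).deriv]
      have h1v : (0:ℝ) < 1 + v := by nlinarith [hv.1, hv.2]
      have h2v : (0:ℝ) < 1 - v := by nlinarith [hv.1, hv.2]
      have h3v : (0:ℝ) < 1 - v ^ 2 := by nlinarith [hv.1, hv.2]
      have hv0 : 0 < v := hv.1
      rw [div_sub_div _ _ h1v.ne' h2v.ne']
      have e1 : (2:ℝ) + (6 * v ^ 2 * (3 * (1 - v ^ 2)) - 2 * v ^ 3 * (3 * (-2 * v))) / (3 * (1 - v ^ 2)) ^ 2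
          - (1 * (1 - v) - (1 + v) * (-1)) / ((1 + v) * (1 - v))
          = (4/3) * v ^ 4 / (1 - v ^ 2) ^ 2 := by
        have hne : ((1:ℝ) + v) * (1 - v) ≠ 0 := by positivity
        field_simp
        ring
      rw [e1]
      positivity
  have := key (by constructor <;> norm_num) (⟨h0.le, h1⟩ : u ∈ Ico (0:ℝ) 1) h0
  simp only [hf] at this
  simp at this
  linarith
noncomputable def binetG (y : ℝ) : ℝ := (y + 1/2) * (Real.log (y + 1) - Real.log y) - 1

lemma binetG_bounds {y : ℝ} (hy : 0 < y) :
    0 < binetG y ∧ binetG y < 1/(12*y) - 1/(12*(y+1)) := by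
  set u : ℝ := 1/(2*y+1) with hu
  have hy1 : (2:ℝ)*y+1 ≠ 0 := by positivity
  have hu0 : 0 < u := by positivity
  have hu1 : u < 1 := by rw [hu, div_lt_one (by linarith)]; linarith
  have hlogeq : Real.log (y + 1) - Real.log y = Real.log (1 + u) - Real.log (1 - u) := by
    have h1 : (1:ℝ) + u = (y + 1) * (2/(2*y+1)) := by rw [hu]; field_simp; ring
    have h2 : (1:ℝ) - u = y * (2/(2*y+1)) := by rw [hu]; field_simp; ring
    rw [h1, h2, Real.log_mul (by positivity) (by positivity),
      Real.log_mul (by positivity) (by positivity)]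
    ring
  have hyu : y + 1/2 = 1/(2*u) := by rw [hu]; field_simp
  have hlo := log_ineq_lower hu0 hu1
  have hhi := log_ineq_upper hu0 hu1
  have h3 : (0:ℝ) < 1 - u^2 := by nlinarith
  constructor
  · rw [binetG, hlogeq, hyu]
    have hmul : (1/(2*u)) * (2*u) < (1/(2*u)) * (Real.log (1+u) - Real.log (1-u)) :=
      mul_lt_mul_of_pos_left hlo (by positivity)
    have hone : (1/(2*u)) * (2*u) = 1 := by field_simp
    linarith
  · have hL : 1/(12*y) - 1/(12*(y+1)) = 1/(12*(y*(y+1))) := by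
      rw [div_sub_div _ _ (by positivity) (by positivity),
        div_eq_div_iff (by positivity) (by positivity)]
      ring
    have hrhs : 1/(12*y) - 1/(12*(y+1)) = u^2 / (3*(1 - u^2)) := by
      rw [hL, div_eq_div_iff (by positivity) (by positivity), hu]
      field_simp
      ring
    rw [binetG, hlogeq, hyu, hrhs]
    have hmul : (1/(2*u)) * (Real.log (1+u) - Real.log (1-u))
        < (1/(2*u)) * (2*u + 2*u^3/(3*(1-u^2))) :=
      mul_lt_mul_of_pos_left hhi (by positivity)
    have heq : (1/(2*u)) * (2*u + 2*u^3/(3*(1-u^2))) = u^2/(3*(1-u^2)) + 1 := by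
      field_simp
      ring
    linarith
noncomputable def binetMu (x : ℝ) : ℝ := ∑' n : ℕ, binetG (x + n)

section MuProps
variable {x : ℝ} (hx : 0 < x)

lemma binet_bound_hasSum (hx : 0 < x) :
    HasSum (fun n : ℕ => 1/(12*(x+n)) - 1/(12*(x+n+1))) (1/(12*x)) := by
  have hpos : ∀ n : ℕ, (0:ℝ) < x + n := fun n => by positivity
  rw [hasSum_iff_tendsto_nat_of_nonneg]
  · have hsum : ∀ n : ℕ, ∑ i ∈ Finset.range n, (1/(12*(x+i)) - 1/(12*(x+i+1)))
        = 1/(12*x) - 1/(12*(x+n)) := by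
      intro n
      have := Finset.sum_range_sub' (fun i : ℕ => 1/(12*(x + i))) n
      simp only [Nat.cast_zero, add_zero] at this
      rw [← this]
      apply Finset.sum_congr rfl
      intro i _
      push_cast
      ring_nf
    simp_rw [hsum]
    have h2 : Filter.Tendsto (fun n : ℕ => 1/(12*(x+n))) Filter.atTop (nhds 0) := by
      simp_rw [one_div]
      apply Filter.Tendsto.comp tendsto_inv_atTop_zero
      apply Filter.Tendsto.const_mul_atTop (by norm_num : (0:ℝ) < 12)
      apply Filter.tendsto_atTop_add_const_left
      exact tendsto_natCast_atTop_atTop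
    simpa using (tendsto_const_nhds (x := 1/(12*x))).sub h2
  · intro n
    have h1 : (0:ℝ) < x + n := hpos n
    have h2 : x + (n:ℝ) < x + n + 1 := by linarith
    have := one_div_lt_one_div_of_lt (by positivity : (0:ℝ) < 12*(x+n)) (by linarith : 12*(x+(n:ℝ)) < 12*(x+n+1))
    linarith

lemma binet_summable (hx : 0 < x) : Summable (fun n : ℕ => binetG (x + n)) := by
  refine Summable.of_nonneg_of_le
    (fun n : ℕ => (binetG_bounds (by positivity : (0:ℝ) < x + n)).1.le)
    (fun n : ℕ => ?_) (binet_bound_hasSum hx).summable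
  have := (binetG_bounds (by positivity : (0:ℝ) < x + n)).2.le
  calc binetG (x + n) ≤ 1/(12*(x+n)) - 1/(12*((x+n)+1)) := this
  _ = 1/(12*(x+n)) - 1/(12*(x+n+1)) := by ring_nf

lemma binetMu_pos (hx : 0 < x) : 0 < binetMu x :=
  Summable.tsum_pos (binet_summable hx) (fun n => (binetG_bounds (by positivity : (0:ℝ) < x + n)).1.le)
    0 (by simpa using (binetG_bounds (by simpa using hx : (0:ℝ) < x + (0:ℕ))).1)

lemma binetMu_lt (hx : 0 < x) : binetMu x < 1/(12*x) := by
  have h := Summable.tsum_lt_tsum (f := fun n : ℕ => binetG (x + n))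
    (g := fun n : ℕ => 1/(12*(x+n)) - 1/(12*(x+n+1))) (i := 0)
    (fun n => le_of_lt (by
      have := (binetG_bounds (by positivity : (0:ℝ) < x + n)).2
      calc binetG (x + n) < 1/(12*(x+n)) - 1/(12*((x+n)+1)) := this
      _ = 1/(12*(x+n)) - 1/(12*(x+n+1)) := by ring_nf))
    (by
      have := (binetG_bounds (by simpa using hx : (0:ℝ) < x + (0:ℕ))).2
      simp only [Nat.cast_zero, add_zero] at this ⊢
      linarith)
    (binet_summable hx) (binet_bound_hasSum hx).summable
  rw [binetMu, ← (binet_bound_hasSum hx).tsum_eq]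
  exact h

lemma binetMu_rec (hx : 0 < x) : binetMu x = binetG x + binetMu (x + 1) := by
  rw [binetMu, Summable.tsum_eq_zero_add (binet_summable hx)]
  congr 1
  · simp
  · rw [binetMu]
    apply tsum_congr
    intro n
    push_cast
    ring_nf

end MuProps
noncomputable def binetE (y : ℝ) : ℝ :=
  Real.log (Real.Gamma y) -
    ((y - 1/2) * Real.log y - y + Real.log (Real.sqrt (2*Real.pi)) + binetMu y)

lemma binetE_rec {y : ℝ} (hy : 0 < y) : binetE (y + 1) = binetE y := by
  have hg := Real.Gamma_pos_of_pos hy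
  rw [binetE, binetE, Real.Gamma_add_one hy.ne', Real.log_mul hy.ne' hg.ne',
    binetMu_rec hy, binetG]
  ring

lemma gamma_log_sum {x : ℝ} (hx : 0 < x) (n : ℕ) :
    ∑ m ∈ Finset.range (n+1), Real.log (x + m)
      = Real.log (Real.Gamma (x + n + 1)) - Real.log (Real.Gamma x) := by
  induction n with
  | zero =>
      rw [Finset.sum_range_one, Nat.cast_zero, add_zero, Real.Gamma_add_one hx.ne',
        Real.log_mul hx.ne' (Real.Gamma_pos_of_pos hx).ne']
      ring
  | succ n ih =>
      have hxn : (0:ℝ) < x + n + 1 := by positivity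
      rw [Finset.sum_range_succ, ih]
      have harg : x + (↑(n+1):ℝ) + 1 = (x + n + 1) + 1 := by push_cast; ring
      rw [harg, Real.Gamma_add_one hxn.ne',
        Real.log_mul hxn.ne' (Real.Gamma_pos_of_pos hxn).ne']
      push_cast
      ring

lemma wendel {x : ℝ} (hx : 0 < x) :
    Filter.Tendsto (fun n : ℕ => Real.log (Real.Gamma (x + n + 1))
      - Real.log (Nat.factorial n) - x * Real.log n) Filter.atTop (nhds 0) := by
  have h := Real.BohrMollerup.tendsto_log_gamma hx
  have h2 : Filter.Tendsto (fun n : ℕ => Real.log (Real.Gamma x)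
      - Real.BohrMollerup.logGammaSeq x n) Filter.atTop (nhds 0) := by
    simpa using (tendsto_const_nhds (x := Real.log (Real.Gamma x))).sub h
  apply h2.congr
  intro n
  rw [Real.BohrMollerup.logGammaSeq, gamma_log_sum hx n]
  ring

lemma stirling_log_tendsto :
    Filter.Tendsto (fun n : ℕ => Real.log (Nat.factorial n) - ((n:ℝ) + 1/2) * Real.log n + n)
      Filter.atTop (nhds (Real.log (Real.sqrt (2*Real.pi)))) := by
  have hpi : (0:ℝ) < Real.sqrt Real.pi := Real.sqrt_pos.mpr Real.pi_pos
  have hsq : Filter.Tendsto (fun n : ℕ => Real.log (Stirling.stirlingSeq n))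
      Filter.atTop (nhds (Real.log (Real.sqrt Real.pi))) :=
    ((Real.continuousAt_log hpi.ne').tendsto).comp Stirling.tendsto_stirlingSeq_sqrt_pi
  have hc : Real.log (Real.sqrt Real.pi) + 1/2 * Real.log 2 = Real.log (Real.sqrt (2*Real.pi)) := by
    rw [Real.log_sqrt Real.pi_pos.le, Real.log_sqrt (by positivity),
      Real.log_mul two_ne_zero Real.pi_pos.ne']
    ring
  rw [← hc]
  apply Filter.Tendsto.congr' _ (hsq.add_const (1/2 * Real.log 2))
  filter_upwards [Filter.eventually_atTop.mpr ⟨1, fun n hn => hn⟩] with n hn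
  have hn0 : (n:ℝ) ≠ 0 := Nat.cast_ne_zero.mpr (by omega)
  rw [Stirling.log_stirlingSeq_formula, Real.log_mul two_ne_zero hn0,
    Real.log_div hn0 (Real.exp_ne_zero 1), Real.log_exp]
  ring

lemma shift_log_tendsto {x : ℝ} (hx : 0 < x) :
    Filter.Tendsto (fun n : ℕ => (x + n + 1/2) * (Real.log (x + n + 1) - Real.log n))
      Filter.atTop (nhds (x + 1)) := by
  have hA : Filter.Tendsto (fun n : ℕ => (n:ℝ) * Real.log (1 + (x+1)/n))
      Filter.atTop (nhds (x+1)) :=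
    (Real.tendsto_mul_log_one_add_div_atTop (x+1)).comp tendsto_natCast_atTop_atTop
  have hB : Filter.Tendsto (fun n : ℕ => Real.log (1 + (x+1)/n)) Filter.atTop (nhds 0) := by
    have h1 : Filter.Tendsto (fun n : ℕ => 1 + (x+1)/(n:ℝ)) Filter.atTop (nhds 1) := by
      simpa using (tendsto_const_div_atTop_nhds_zero_nat (x+1)).const_add 1
    have := ((Real.continuousAt_log one_ne_zero).tendsto).comp h1
    simpa [Function.comp_def] using this
  have hcomb : Filter.Tendsto (fun n : ℕ => (n:ℝ) * Real.log (1 + (x+1)/n)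
      + (x + 1/2) * Real.log (1 + (x+1)/n)) Filter.atTop (nhds (x+1)) := by
    simpa using hA.add (hB.const_mul (x + 1/2))
  apply Filter.Tendsto.congr' _ hcomb
  filter_upwards [Filter.eventually_atTop.mpr ⟨1, fun n hn => hn⟩] with n hn
  have hn0 : (0:ℝ) < (n:ℝ) := by exact_mod_cast Nat.pos_of_ne_zero (by omega)
  have harg : 1 + (x+1)/(n:ℝ) = (x + n + 1)/n := by field_simp; ring
  rw [harg, Real.log_div (by positivity) hn0.ne']
  ring

lemma binetE_zero {x : ℝ} (hx : 0 < x) : binetE x = 0 := by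
  have hshift : ∀ n : ℕ, binetE (x + n + 1) = binetE x := by
    intro n
    induction n with
    | zero => simpa using binetE_rec hx
    | succ n ih =>
        have hxn : (0:ℝ) < x + n + 1 := by positivity
        have harg : x + (↑(n+1):ℝ) + 1 = (x + n + 1) + 1 := by push_cast; ring
        rw [harg, binetE_rec hxn, ih]
  have hmu : Filter.Tendsto (fun n : ℕ => binetMu (x + n + 1)) Filter.atTop (nhds 0) := by
    refine squeeze_zero (g := fun n : ℕ => 1/(12*(x + n + 1)))
      (fun n : ℕ => (binetMu_pos (by positivity : (0:ℝ) < x + n + 1)).le)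
      (fun n : ℕ => (binetMu_lt (by positivity : (0:ℝ) < x + n + 1)).le) ?_
    simp_rw [one_div]
    apply Filter.Tendsto.comp tendsto_inv_atTop_zero
    apply Filter.Tendsto.const_mul_atTop (by norm_num : (0:ℝ) < 12)
    apply Filter.tendsto_atTop_add_const_right
    apply Filter.tendsto_atTop_add_const_left
    exact tendsto_natCast_atTop_atTop
  have hlim : Filter.Tendsto (fun n : ℕ => binetE (x + n + 1)) Filter.atTop (nhds 0) := by
    have hsum := (((wendel hx).add
        ((stirling_log_tendsto).sub_const (Real.log (Real.sqrt (2*Real.pi))))).sub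
        ((shift_log_tendsto hx).sub_const (x+1))).sub hmu
    have : (0:ℝ) + (Real.log (Real.sqrt (2*Real.pi)) - Real.log (Real.sqrt (2*Real.pi)))
        - ((x+1) - (x+1)) - 0 = 0 := by ring
    rw [this] at hsum
    apply hsum.congr
    intro n
    simp only [binetE]
    ring
  have h2 := hlim.congr (fun n => hshift n)
  exact (tendsto_nhds_unique h2 tendsto_const_nhds).symm

theorem stirling_with_error (x : ℝ) (hx : 0 < x) :
    ∃ θ : ℝ, 0 < θ ∧ θ < 1 ∧
      Real.Gamma (x + 1) =
        Real.sqrt (2 * π) * x ^ (x + 1 / 2) * Real.exp (-x + θ / (12 * x)) := by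
  refine ⟨12 * x * binetMu x, mul_pos (by positivity) (binetMu_pos hx), ?_, ?_⟩
  · have := binetMu_lt hx
    rw [lt_div_iff₀ (by positivity : (0:ℝ) < 12 * x)] at this
    calc 12 * x * binetMu x = binetMu x * (12 * x) := by ring
    _ < 1 := this
  · have hE := binetE_zero hx
    rw [binetE, sub_eq_zero] at hE
    set c := Real.log (Real.sqrt (2*π)) with hc
    have hθ : 12 * x * binetMu x / (12 * x) = binetMu x := by field_simp
    have hs : Real.sqrt (2*π) = Real.exp c := (Real.exp_log (by positivity)).symm
    have hgam : Real.Gamma (x + 1)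
        = Real.exp (Real.log x + ((x - 1/2) * Real.log x - x + c + binetMu x)) := by
      rw [Real.exp_add, ← hE, Real.exp_log hx, Real.exp_log (Real.Gamma_pos_of_pos hx),
        Real.Gamma_add_one hx.ne']
    rw [hθ, hgam, Real.rpow_def_of_pos hx, hs, ← Real.exp_add, ← Real.exp_add]
    congr 1
    ring
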